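/- arXiv:1411.0222 — 2 statements merged into one kernel-verified Lean document; each statement's English description precedes it below -/
import Mathlib

section
/- Fix 0 < σ < 1 and define the ultrametric dist(c,d) = σ^{ord(c-d)} on formal power series. Then for any series c₁, c₂, d₁, d₂ over a finite alphabet, dist(c₁ ⧢ d₁, c₂ ⧢ d₂) ≤ max(σ^{ord(c₁)} · dist(d₁,d₂), σ^{ord(d₂)} · dist(c₁,c₂)). -/
/-- Shuffle product of formal power series (words to `ℝ`), via the left-quotient recursion. -/
noncomputable def shuffle {X : Type*} : (List X → ℝ) → (List X → ℝ) → List X → ℝ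
  | c, d, [] => c [] * d []
  | c, d, x :: w => shuffle (fun u => c (x :: u)) d w + shuffle c (fun u => d (x :: u)) w

/-- Order of a series: minimal word length in the support, `⊤` for the zero series. -/
noncomputable def ord {X : Type*} (c : List X → ℝ) : ℕ∞ :=
  sInf {n : ℕ∞ | ∃ w, c w ≠ 0 ∧ (w.length : ℕ∞) = n}

/-- `σ` raised to an extended-natural power, with `σ^⊤ = 0`. -/
noncomputable def upow (σ : ℝ) (n : ℕ∞) : ℝ :=
  if n = ⊤ then 0 else σ ^ n.toNat

lemma ord_vanish {X : Type*} {c : List X → ℝ} {w : List X}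
    (h : (w.length : ℕ∞) < ord c) : c w = 0 := by
  by_contra hw
  have hle : ord c ≤ (w.length : ℕ∞) := sInf_le (⟨w, hw, rfl⟩ :
    (w.length : ℕ∞) ∈ {n : ℕ∞ | ∃ w, c w ≠ 0 ∧ (w.length : ℕ∞) = n})
  exact absurd hle (not_le.2 h)

lemma le_ord {X : Type*} {c : List X → ℝ} {n : ℕ∞}
    (h : ∀ w : List X, (w.length : ℕ∞) < n → c w = 0) : n ≤ ord c := by
  refine le_sInf ?_
  rintro m ⟨w, hw, rfl⟩
  by_contra hlt
  exact hw (h w (not_le.1 hlt))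

lemma shuffle_vanish {X : Type*} :
    ∀ (w : List X) (c d : List X → ℝ) (m n : ℕ),
      (∀ u : List X, u.length < m → c u = 0) →
      (∀ u : List X, u.length < n → d u = 0) →
      w.length < m + n → shuffle c d w = 0 := by
  intro w
  induction w with
  | nil =>
    intro c d m n hc hd hlen
    simp only [shuffle]
    rcases Nat.lt_or_ge 0 m with hm | hm
    · rw [hc [] (by simpa using hm)]; ring
    · rw [hd [] (by omega)]; ring
  | cons x w ih =>
    intro c d m n hc hd hlen
    simp only [shuffle]
    rw [ih (fun u => c (x :: u)) d (m - 1) n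
        (fun u hu => hc (x :: u) (by simp; omega))
        hd (by simp at hlen ⊢; omega),
      ih c (fun u => d (x :: u)) m (n - 1)
        hc (fun u hu => hd (x :: u) (by simp; omega))
        (by simp at hlen ⊢; omega)]
    ring

lemma ord_shuffle {X : Type*} (c d : List X → ℝ) :
    ord c + ord d ≤ ord (shuffle c d) := by
  refine le_ord fun w hw => ?_
  by_cases hc : ord c = ⊤
  · by_cases hd : ord d = ⊤
    · exact shuffle_vanish w c d (w.length + 1) (w.length + 1)
        (fun u hu => ord_vanish (by rw [hc]; exact_mod_cast WithTop.coe_lt_top _))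
        (fun u hu => ord_vanish (by rw [hd]; exact_mod_cast WithTop.coe_lt_top _))
        (by omega)
    · exact shuffle_vanish w c d (w.length + 1) 0
        (fun u hu => ord_vanish (by rw [hc]; exact_mod_cast WithTop.coe_lt_top _))
        (fun u hu => absurd hu (by omega)) (by omega)
  · by_cases hd : ord d = ⊤
    · exact shuffle_vanish w c d 0 (w.length + 1)
        (fun u hu => absurd hu (by omega))
        (fun u hu => ord_vanish (by rw [hd]; exact_mod_cast WithTop.coe_lt_top _))
        (by omega)
    · have hm : ord c = ((ord c).toNat : ℕ∞) := (ENat.coe_toNat hc).symm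
      have hn : ord d = ((ord d).toNat : ℕ∞) := (ENat.coe_toNat hd).symm
      refine shuffle_vanish w c d (ord c).toNat (ord d).toNat
        (fun u hu => ord_vanish (by rw [hm]; exact_mod_cast hu))
        (fun u hu => ord_vanish (by rw [hn]; exact_mod_cast hu)) ?_
      rw [hm, hn] at hw
      exact_mod_cast hw

lemma min_ord_le_add {X : Type*} (a b : List X → ℝ) :
    min (ord a) (ord b) ≤ ord (a + b) := by
  refine le_ord fun w hw => ?_
  have ha : a w = 0 := ord_vanish (lt_of_lt_of_le hw (min_le_left _ _))
  have hb : b w = 0 := ord_vanish (lt_of_lt_of_le hw (min_le_right _ _))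
  simp [ha, hb]

lemma shuffle_sub {X : Type*} :
    ∀ (w : List X) (c₁ c₂ d₁ d₂ : List X → ℝ),
      shuffle c₁ d₁ w - shuffle c₂ d₂ w
        = shuffle c₁ (d₁ - d₂) w + shuffle (c₁ - c₂) d₂ w := by
  intro w
  induction w with
  | nil => intro c₁ c₂ d₁ d₂; simp only [shuffle, Pi.sub_apply]; ring
  | cons x w ih =>
    intro c₁ c₂ d₁ d₂
    simp only [shuffle]
    have e1 : (fun u => (d₁ - d₂) (x :: u)) =
        (fun u => d₁ (x :: u)) - (fun u => d₂ (x :: u)) := rfl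
    have e2 : (fun u => (c₁ - c₂) (x :: u)) =
        (fun u => c₁ (x :: u)) - (fun u => c₂ (x :: u)) := rfl
    rw [e1, e2]
    have h1 := ih (fun u => c₁ (x :: u)) (fun u => c₂ (x :: u)) d₁ d₂
    have h2 := ih c₁ c₂ (fun u => d₁ (x :: u)) (fun u => d₂ (x :: u))
    linarith [ih c₁ c₁ (fun u => d₁ (x :: u)) (fun u => d₂ (x :: u)),
      ih (fun u => c₁ (x :: u)) (fun u => c₂ (x :: u)) d₂ d₂]

lemma upow_nonneg {σ : ℝ} (hσ0 : 0 ≤ σ) (n : ℕ∞) : 0 ≤ upow σ n := by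
  unfold upow; split
  · exact le_rfl
  · exact pow_nonneg hσ0 _

lemma upow_antitone {σ : ℝ} (hσ0 : 0 ≤ σ) (hσ1 : σ ≤ 1) {m n : ℕ∞} (h : m ≤ n) :
    upow σ n ≤ upow σ m := by
  by_cases hn : n = ⊤
  · rw [hn]
    have htop : upow σ ⊤ = 0 := if_pos rfl
    rw [htop]
    exact upow_nonneg hσ0 m
  · have hm : m ≠ ⊤ := fun hm => hn (top_le_iff.1 (hm ▸ h))
    unfold upow
    rw [if_neg hn, if_neg hm]
    exact pow_le_pow_of_le_one hσ0 hσ1 (ENat.toNat_le_toNat h hn)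

lemma upow_add (σ : ℝ) (m n : ℕ∞) : upow σ (m + n) = upow σ m * upow σ n := by
  unfold upow
  by_cases hm : m = ⊤
  · simp [hm]
  by_cases hn : n = ⊤
  · simp [hn]
  have : m + n ≠ ⊤ := by
    exact WithTop.add_ne_top.2 ⟨hm, hn⟩
  rw [if_neg this, if_neg hm, if_neg hn, ENat.toNat_add hm hn, pow_add]

/-- The ultrametric distance `dist(c,d) = σ^(ord (c-d))`. -/
noncomputable def udist {X : Type*} (σ : ℝ) (c d : List X → ℝ) : ℝ :=
  upow σ (ord (c - d))

theorem udist_shuffle_le {X : Type*} [Fintype X] (σ : ℝ) (hσ0 : 0 < σ) (hσ1 : σ < 1)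
    (c₁ c₂ d₁ d₂ : List X → ℝ) :
    udist σ (shuffle c₁ d₁) (shuffle c₂ d₂) ≤
      max (upow σ (ord c₁) * udist σ d₁ d₂) (upow σ (ord d₂) * udist σ c₁ c₂) := by
  have hdiff : shuffle c₁ d₁ - shuffle c₂ d₂
      = shuffle c₁ (d₁ - d₂) + shuffle (c₁ - c₂) d₂ := by
    funext w
    exact shuffle_sub w c₁ c₂ d₁ d₂
  have hord : min (ord c₁ + ord (d₁ - d₂)) (ord (c₁ - c₂) + ord d₂)
      ≤ ord (shuffle c₁ d₁ - shuffle c₂ d₂) := by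
    rw [hdiff]
    refine le_trans (le_min ?_ ?_) (min_ord_le_add _ _)
    · exact min_le_left _ _ |>.trans (ord_shuffle c₁ (d₁ - d₂))
    · exact min_le_right _ _ |>.trans (ord_shuffle (c₁ - c₂) d₂)
  have key : udist σ (shuffle c₁ d₁) (shuffle c₂ d₂)
      ≤ upow σ (min (ord c₁ + ord (d₁ - d₂)) (ord (c₁ - c₂) + ord d₂)) :=
    upow_antitone hσ0.le hσ1.le hord
  refine key.trans ?_
  rcases min_cases (ord c₁ + ord (d₁ - d₂)) (ord (c₁ - c₂) + ord d₂) with ⟨h, _⟩ | ⟨h, _⟩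
  · rw [h, upow_add]
    exact le_max_left _ _
  · rw [h, upow_add, mul_comm]
    exact le_max_right _ _
end

section
/- If c and d are non-proper formal power series with the same constant term, then ord(c^{⧢-1} - d^{⧢-1}) = ord(c - d); equivalently, the shuffle inversion is an isometry on each set of non-proper series with a fixed constant term. -/
/-- The series `1` (the empty word). -/
noncomputable def oneF {X : Type*} : List X → ℝ := fun w => match w with | [] => 1 | _ => 0

/-- Shuffle powers. -/
noncomputable def shufflePow {X : Type*} (c : List X → ℝ) : ℕ → List X → ℝ
  | 0 => oneF
  | n + 1 => shuffle c (shufflePow c n)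

/-- Shuffle inverse of a non-proper series:
`c^{⧢-1} = (c,∅)⁻¹ · (c')^{⧢*}` where `c' = 1 - c/(c,∅)` and `(c')^{⧢*} = Σ_{k≥0} (c')^{⧢k}`. -/
noncomputable def shuffleInv {X : Type*} (c : List X → ℝ) : List X → ℝ :=
  fun w => (c [])⁻¹ * ∑' k : ℕ, shufflePow (oneF - (c [])⁻¹ • c) k w

lemma shuffle_nil {X : Type*} (c d : List X → ℝ) : shuffle c d [] = c [] * d [] := by
  rw [shuffle]

lemma shuffle_cons {X : Type*} (c d : List X → ℝ) (x : X) (w : List X) :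
    shuffle c d (x :: w) =
      shuffle (fun u => c (x :: u)) d w + shuffle c (fun u => d (x :: u)) w := by
  rw [shuffle]

lemma shuffle_congr {X : Type*} :
    ∀ (u : List X) (a b p q : ℕ) (f1 f2 g1 g2 : List X → ℝ),
      (∀ v, v.length < a → f1 v = f2 v) →
      (∀ v, v.length < b → g1 v = g2 v) →
      (∀ v, v.length < p → f1 v = 0) →
      (∀ v, v.length < p → f2 v = 0) →
      (∀ v, v.length < q → g1 v = 0) →
      (∀ v, v.length < q → g2 v = 0) →
      u.length < a + q → u.length < p + b →
      shuffle f1 g1 u = shuffle f2 g2 u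
  | [], a, b, p, q, f1, f2, g1, g2, hf, hg, hp1, hp2, hq1, hq2, h1, h2 => by
    rw [shuffle_nil, shuffle_nil]
    rcases Nat.eq_zero_or_pos a with ha | ha
    · rw [hq1 [] (by simp; omega), hq2 [] (by simp; omega)]; ring
    · rcases Nat.eq_zero_or_pos b with hb | hb
      · rw [hp1 [] (by simp; omega), hp2 [] (by simp; omega)]; ring
      · rw [hf [] (by simpa), hg [] (by simpa)]
  | x :: w, a, b, p, q, f1, f2, g1, g2, hf, hg, hp1, hp2, hq1, hq2, h1, h2 => by
    rw [shuffle_cons, shuffle_cons]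
    congr 1
    · exact shuffle_congr w (a-1) b (p-1) q _ _ _ _
        (fun v hv => hf _ (by simp; omega)) hg
        (fun v hv => hp1 _ (by simp; omega)) (fun v hv => hp2 _ (by simp; omega))
        hq1 hq2 (by simp at h1 ⊢; omega) (by simp at h2 ⊢; omega)
    · exact shuffle_congr w a (b-1) p (q-1) _ _ _ _
        hf (fun v hv => hg _ (by simp; omega))
        hp1 hp2 (fun v hv => hq1 _ (by simp; omega)) (fun v hv => hq2 _ (by simp; omega))
        (by simp at h1 ⊢; omega) (by simp at h2 ⊢; omega)

lemma shuffle_vanish_s4 {X : Type*} :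
    ∀ (u : List X) (p q : ℕ) (f g : List X → ℝ),
      (∀ v, v.length < p → f v = 0) → (∀ v, v.length < q → g v = 0) →
      u.length < p + q → shuffle f g u = 0
  | [], p, q, f, g, hp, hq, h1 => by
    rw [shuffle_nil]
    rcases Nat.eq_zero_or_pos p with hp0 | hp0
    · rw [hq [] (by simp; omega)]; ring
    · rw [hp [] (by simpa)]; ring
  | x :: w, p, q, f, g, hp, hq, h1 => by
    rw [shuffle_cons]
    rw [shuffle_vanish_s4 w (p-1) q _ _ (fun v hv => hp _ (by simp; omega)) hq
        (by simp at h1 ⊢; omega),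
      shuffle_vanish_s4 w p (q-1) _ _ hp (fun v hv => hq _ (by simp; omega))
        (by simp at h1 ⊢; omega)]
    ring

lemma shuffle_oneF {X : Type*} : ∀ (u : List X) (f : List X → ℝ), shuffle f oneF u = f u
  | [], f => by rw [shuffle_nil]; show f [] * 1 = f []; ring
  | x :: w, f => by
    rw [shuffle_cons, shuffle_oneF w]
    have : shuffle f (fun u => oneF (x :: u)) w = 0 := by
      apply shuffle_vanish_s4 w 0 (w.length + 1) _ _ (by omega) (fun v _ => rfl) (by omega)
    rw [this]; ring

lemma shufflePow_vanish {X : Type*} (f : List X → ℝ) (hf : f [] = 0) :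
    ∀ (k : ℕ) (u : List X), u.length < k → shufflePow f k u = 0
  | k + 1, u, hu => by
    simp only [shufflePow]
    exact shuffle_vanish_s4 u 1 k f _
      (fun v hv => by
        have : v = [] := List.length_eq_zero_iff.mp (by omega)
        simpa [this] using hf)
      (fun v hv => shufflePow_vanish f hf k v hv) (by omega)

lemma shufflePow_congr {X : Type*} (m : ℕ) (f g : List X → ℝ) (hf : f [] = 0) (hg : g [] = 0)
    (h : ∀ v, v.length < m → f v = g v) :
    ∀ (k : ℕ) (u : List X), u.length + 1 < m + k → shufflePow f k u = shufflePow g k u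
  | 0, u, _ => rfl
  | k + 1, u, hu => by
    simp only [shufflePow]
    exact shuffle_congr u m (m + k - 1) 1 k f g _ _
      h (fun v hv => shufflePow_congr m f g hf hg h k v (by omega))
      (fun v hv => by have : v = [] := List.length_eq_zero_iff.mp (by omega); simpa [this] using hf)
      (fun v hv => by have : v = [] := List.length_eq_zero_iff.mp (by omega); simpa [this] using hg)
      (shufflePow_vanish f hf k) (shufflePow_vanish g hg k)
      (by omega) (by omega)

lemma proper_nil {X : Type*} (c : List X → ℝ) (hc : c [] ≠ 0) :
    ((oneF : List X → ℝ) - (c [])⁻¹ • c) [] = 0 := by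
  simp only [Pi.sub_apply, Pi.smul_apply, smul_eq_mul, oneF, inv_mul_cancel₀ hc, sub_self]

lemma shuffleInv_apply {X : Type*} (c : List X → ℝ) (hc : c [] ≠ 0) (u : List X) :
    shuffleInv c u = (c [])⁻¹ * ∑ k ∈ Finset.range (u.length + 1),
      shufflePow (oneF - (c [])⁻¹ • c) k u := by
  unfold shuffleInv
  congr 1
  apply tsum_eq_sum
  intro k hk
  exact shufflePow_vanish _ (proper_nil c hc) k u (by simp [Finset.mem_range] at hk; omega)

lemma ord_eq {X : Type*} (e : List X → ℝ) (m : ℕ) (w : List X) (hw : w.length = m)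
    (hne : e w ≠ 0) (hmin : ∀ v, v.length < m → e v = 0) : ord e = (m : ℕ∞) := by
  apply le_antisymm
  · exact sInf_le ⟨w, hne, by rw [hw]⟩
  · apply le_sInf
    rintro n ⟨v, hv, rfl⟩
    by_contra hlt
    push_neg at hlt
    exact hv (hmin v (by exact_mod_cast hlt))

/-- Shuffle inversion is an isometry on non-proper series with a fixed constant term. -/
theorem ord_shuffleInv_sub {X : Type*} [Fintype X] (c d : List X → ℝ)
    (hc : c [] ≠ 0) (hd : d [] ≠ 0) (h : c [] = d []) :
    ord (shuffleInv c - shuffleInv d) = ord (c - d) := by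
  classical
  by_cases hcd : ∀ w : List X, c w = d w
  · have hce : c = d := funext hcd
    subst hce
    rw [sub_self, sub_self]
  · push_neg at hcd
    obtain ⟨w0, hw0⟩ := hcd
    have hP : ∃ n, ∃ w : List X, w.length = n ∧ c w ≠ d w := ⟨w0.length, w0, rfl, hw0⟩
    obtain ⟨m, ⟨w, hwlen, hwne⟩, hminP⟩ :
        ∃ n, (∃ w : List X, w.length = n ∧ c w ≠ d w) ∧
          ∀ k < n, ¬ ∃ w : List X, w.length = k ∧ c w ≠ d w :=
      ⟨Nat.find hP, Nat.find_spec hP, fun k hk => Nat.find_min hP hk⟩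
    have hmin : ∀ v : List X, v.length < m → c v = d v := by
      intro v hv
      by_contra hne
      exact hminP v.length hv ⟨v, rfl, hne⟩
    have hm1 : 1 ≤ m := by
      rcases Nat.eq_zero_or_pos m with hm0 | hm0
      · exfalso
        rw [hm0] at hwlen
        rw [List.length_eq_zero_iff.mp hwlen] at hwne
        exact hwne h
      · exact hm0
    set c' : List X → ℝ := oneF - (c [])⁻¹ • c with hc'
    set d' : List X → ℝ := oneF - (d [])⁻¹ • d with hd'
    have hc'0 : c' [] = 0 := proper_nil c hc
    have hd'0 : d' [] = 0 := proper_nil d hd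
    have hcd' : ∀ v : List X, v.length < m → c' v = d' v := by
      intro v hv
      simp only [hc', hd', Pi.sub_apply, Pi.smul_apply, smul_eq_mul, h, hmin v hv]
    have key : ∀ u : List X, (shuffleInv c - shuffleInv d) u =
        (c [])⁻¹ * ∑ k ∈ Finset.range (u.length + 1),
          (shufflePow c' k u - shufflePow d' k u) := by
      intro u
      have h1 := shuffleInv_apply c hc u
      have h2 := shuffleInv_apply d hd u
      rw [Pi.sub_apply, h1, h2, ← hc', ← hd',
        show (d [] : ℝ)⁻¹ = (c [])⁻¹ by rw [h], ← mul_sub, ← Finset.sum_sub_distrib]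
    have facti : ∀ u : List X, u.length < m → (shuffleInv c - shuffleInv d) u = 0 := by
      intro u hu
      rw [key u]
      rw [Finset.sum_eq_zero, mul_zero]
      intro k hk
      rcases Nat.eq_zero_or_pos k with rfl | hk1
      · simp [shufflePow]
      · rw [shufflePow_congr m c' d' hc'0 hd'0 hcd' k u (by omega), sub_self]
    have wne : w ≠ [] := by
      intro hwe
      rw [hwe] at hwlen
      simp at hwlen
      omega
    have onew : oneF w = (0 : ℝ) := by
      cases w with
      | nil => exact absurd rfl wne
      | cons a l => rfl
    have factii : (shuffleInv c - shuffleInv d) w ≠ 0 := by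
      rw [key w]
      have hsum : ∑ k ∈ Finset.range (w.length + 1), (shufflePow c' k w - shufflePow d' k w)
          = c' w - d' w := by
        rw [Finset.sum_eq_single_of_mem 1 (by simp [Finset.mem_range]; omega)]
        · simp only [shufflePow, shuffle_oneF]
        · intro k hk hk1
          rcases Nat.eq_zero_or_pos k with rfl | hk2
          · simp [shufflePow]
          · rw [shufflePow_congr m c' d' hc'0 hd'0 hcd' k w (by omega), sub_self]
      rw [hsum]
      have hdiff : c' w - d' w = (c [])⁻¹ * (d w - c w) := by
        simp only [hc', hd', Pi.sub_apply, Pi.smul_apply, smul_eq_mul, onew, ← h]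
        ring
      rw [hdiff]
      exact mul_ne_zero (inv_ne_zero hc)
        (mul_ne_zero (inv_ne_zero hc) (sub_ne_zero.mpr (Ne.symm hwne)))
    rw [ord_eq (shuffleInv c - shuffleInv d) m w hwlen factii facti,
      ord_eq (c - d) m w hwlen (sub_ne_zero.mpr hwne)
        (fun v hv => sub_eq_zero.mpr (hmin v hv))]
end
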